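/- Fix α > 1, a finite set Y, a strictly positive probability distribution q on Y, and nonnegative weights g : Y → ℝ≥0. Then the function β ↦ (α/((α-1)β)) · log ∑_y q(y)^(1-β) g(y)^(β/α) is monotonically non-decreasing in β on [1, ∞), provided ∑_y q(y)^(1-β) g(y)^(β/α) ≥ 1 for all β (equivalently the log is nonnegative). More precisely, without that proviso: for 1 ≤ β₁ ≤ β₂, ∑_y q(y)^(1-β₁) g(y)^(β₁/α) ≤ (∑_y q(y)^(1-β₂) g(y)^(β₂/α))^(β₁/β₂). -/
import Mathlib

open Finset Real

theorem stmt2 {Y : Type*} [Fintype Y] [Nonempty Y]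
    (q : Y → ℝ) (hq : ∀ y, 0 < q y) (hqsum : ∑ y, q y = 1)
    (g : Y → ℝ) (hg : ∀ y, 0 ≤ g y)
    {α β₁ β₂ : ℝ} (hα : 1 < α) (hβ₁ : 1 ≤ β₁) (hβ : β₁ ≤ β₂) :
    ∑ y, q y ^ (1 - β₁) * g y ^ (β₁ / α)
      ≤ (∑ y, q y ^ (1 - β₂) * g y ^ (β₂ / α)) ^ (β₁ / β₂) := by
  have hβ₁0 : (0:ℝ) < β₁ := lt_of_lt_of_le one_pos hβ₁
  have hβ₂0 : (0:ℝ) < β₂ := lt_of_lt_of_le hβ₁0 hβ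
  set X : Y → ℝ := fun y => q y ^ (-1:ℝ) * g y ^ (α⁻¹) with hX
  have hXnn : ∀ y, 0 ≤ X y := fun y =>
    mul_nonneg (rpow_nonneg (hq y).le _) (rpow_nonneg (hg y) _)
  have key : ∀ (β : ℝ) (y : Y), q y ^ (1 - β) * g y ^ (β / α) = q y * X y ^ β := by
    intro β y
    rw [hX, Real.mul_rpow (rpow_nonneg (hq y).le _) (rpow_nonneg (hg y) _),
      ← Real.rpow_mul (hq y).le, ← Real.rpow_mul (hg y)]
    rw [show (α⁻¹ * β) = β / α by ring, ← mul_assoc]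
    congr 1
    rw [neg_one_mul, Real.rpow_neg (hq y).le, Real.rpow_sub (hq y), Real.rpow_one,
      div_eq_mul_inv]
  have hz : ∀ y, 0 ≤ X y ^ β₁ := fun y => rpow_nonneg (hXnn y) _
  have hp : 1 ≤ β₂ / β₁ := (one_le_div hβ₁0).mpr hβ
  have main := Real.arith_mean_le_rpow_mean Finset.univ q (fun y => X y ^ β₁)
    (fun y _ => (hq y).le) hqsum (fun y _ => hz y) hp
  have e1 : ∀ y : Y, (X y ^ β₁) ^ (β₂ / β₁) = X y ^ β₂ := by
    intro y
    rw [← Real.rpow_mul (hXnn y), mul_div_cancel₀ _ (ne_of_gt hβ₁0)]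
  have e2 : (1 : ℝ) / (β₂ / β₁) = β₁ / β₂ := by
    field_simp
  simp only [e1, e2] at main
  calc ∑ y, q y ^ (1 - β₁) * g y ^ (β₁ / α) = ∑ y, q y * X y ^ β₁ := by
        simp only [key]
    _ ≤ (∑ y, q y * X y ^ β₂) ^ (β₁ / β₂) := main
    _ = (∑ y, q y ^ (1 - β₂) * g y ^ (β₂ / α)) ^ (β₁ / β₂) := by
        simp only [key]
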